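/- Let L ∈ ℝ^{n×m} be such that (I−LC)Ã is Schur stable, z > 0, and let Θ be the positive definite solution of Θ = (I−LC)(ÃΘÃᵀ + zI + Q_m)(I−LC)ᵀ + LR_mLᵀ. If ‖G‖₂ ≤ sqrt( z / (d_m²(μ+μ²)λ_max(Θ)) ), then with G̃ = sqrt(μ+μ²)G one has d_m² G̃Θ G̃ᵀ ≤ zI, and consequently the map X ↦ (I−LC)(ÃXÃᵀ + d_m²G̃XG̃ᵀ + Q_m)(I−LC)ᵀ + LR_mLᵀ maps the order interval [0, Θ] into itself. -/

import Mathlib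

open Matrix
open scoped Matrix.Norms.L2Operator



lemma psd_smul {n : ℕ} {M : Matrix (Fin n) (Fin n) ℝ} (hM : M.PosSemidef) {a : ℝ} (ha : 0 ≤ a) :
    (a • M).PosSemidef := by
  refine Matrix.PosSemidef.of_dotProduct_mulVec_nonneg ?_ fun x => ?_
  · unfold Matrix.IsHermitian
    rw [conjTranspose_smul, hM.1.eq]; simp
  · rw [smul_mulVec, dotProduct_smul, smul_eq_mul]
    exact mul_nonneg ha (hM.dotProduct_mulVec_nonneg x)

lemma psd_sup_smul_one_sub {n : ℕ} {Θ : Matrix (Fin n) (Fin n) ℝ} (hΘ : Θ.PosSemidef) :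
    ((⨆ i, hΘ.1.eigenvalues i) • (1 : Matrix (Fin n) (Fin n) ℝ) - Θ).PosSemidef := by
  set lam := ⨆ i, hΘ.1.eigenvalues i with hlam
  have hU := hΘ.1.spectral_theorem
  set U := (hΘ.1.eigenvectorUnitary : Matrix (Fin n) (Fin n) ℝ) with hUdef
  have hUU : U * star U = 1 := Matrix.mem_unitaryGroup_iff.mp hΘ.1.eigenvectorUnitary.2
  have h1 : lam • (1 : Matrix (Fin n) (Fin n) ℝ) = U * (lam • 1) * star U := by
    rw [Matrix.mul_smul, Matrix.mul_one, Matrix.smul_mul, hUU]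
  have hdiag : (lam • (1 : Matrix (Fin n) (Fin n) ℝ) - Θ)
      = U * (diagonal (fun i => lam - hΘ.1.eigenvalues i)) * star U := by
    have hd2 : lam • (1 : Matrix (Fin n) (Fin n) ℝ)
        - diagonal (RCLike.ofReal ∘ hΘ.1.eigenvalues)
        = diagonal (fun i => lam - hΘ.1.eigenvalues i) := by
      ext i j
      by_cases hij : i = j <;>
        simp [Matrix.sub_apply, Matrix.smul_apply, Matrix.one_apply, diagonal, hij]
    conv_rhs => rw [← hd2]
    rw [Matrix.mul_sub, Matrix.sub_mul, ← h1]
    congr 1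
  rw [hdiag]
  have : (diagonal (fun i => lam - hΘ.1.eigenvalues i)).PosSemidef := by
    refine Matrix.PosSemidef.diagonal fun i => ?_
    have : hΘ.1.eigenvalues i ≤ lam :=
      le_ciSup (Set.Finite.bddAbove (Set.finite_range _)) i
    simp only [Pi.zero_apply]
    linarith
  have := this.mul_mul_conjTranspose_same U
  simpa [Matrix.star_eq_conjTranspose] using this

lemma dot_self_eq_norm_sq {n : ℕ} (v : Fin n → ℝ) :
    v ⬝ᵥ v = ‖(WithLp.equiv 2 (Fin n → ℝ)).symm v‖ ^ 2 := by
  rw [EuclideanSpace.norm_eq, Real.sq_sqrt (by positivity)]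
  simp [dotProduct, Real.norm_eq_abs, sq_abs, pow_two]

lemma psd_norm_sq_smul_one_sub_mul_transpose {n : ℕ} (G : Matrix (Fin n) (Fin n) ℝ) :
    ((‖G‖ ^ 2) • (1 : Matrix (Fin n) (Fin n) ℝ) - G * Gᵀ).PosSemidef := by
  have hGH : Gᴴ = Gᵀ := by ext i j; simp [conjTranspose_apply]
  refine Matrix.PosSemidef.of_dotProduct_mulVec_nonneg ?_ fun x => ?_
  · unfold Matrix.IsHermitian
    rw [conjTranspose_sub, conjTranspose_smul, conjTranspose_one, conjTranspose_mul, ← hGH,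
      conjTranspose_conjTranspose]
    simp
  · have hx : star x = x := by ext i; simp
    rw [hx, sub_mulVec, dotProduct_sub, smul_mulVec, one_mulVec, dotProduct_smul,
      smul_eq_mul]
    have h1 : x ⬝ᵥ (G * Gᵀ) *ᵥ x = (Gᵀ *ᵥ x) ⬝ᵥ (Gᵀ *ᵥ x) := by
      rw [← mulVec_mulVec, dotProduct_mulVec, Matrix.mulVec_transpose]
    rw [h1, dot_self_eq_norm_sq, dot_self_eq_norm_sq]
    have h2 : ‖(WithLp.equiv 2 (Fin n → ℝ)).symm (Gᵀ *ᵥ x)‖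
        ≤ ‖Gᵀ‖ * ‖(WithLp.equiv 2 (Fin n → ℝ)).symm x‖ :=
      Matrix.l2_opNorm_mulVec Gᵀ ((WithLp.equiv 2 (Fin n → ℝ)).symm x)
    have h3 : ‖Gᵀ‖ = ‖G‖ := by rw [← hGH]; exact Matrix.l2_opNorm_conjTranspose G
    rw [h3] at h2
    have h4 : ‖(WithLp.equiv 2 (Fin n → ℝ)).symm (Gᵀ *ᵥ x)‖ ^ 2
        ≤ (‖G‖ * ‖(WithLp.equiv 2 (Fin n → ℝ)).symm x‖) ^ 2 :=
      pow_le_pow_left₀ (norm_nonneg _) h2 2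
    nlinarith [norm_nonneg ((WithLp.equiv 2 (Fin n → ℝ)).symm x),
      norm_nonneg ((WithLp.equiv 2 (Fin n → ℝ)).symm (Gᵀ *ᵥ x))]

lemma ct_eq {a b : ℕ} (M : Matrix (Fin a) (Fin b) ℝ) : Mᴴ = Mᵀ := by
  ext i j; simp [conjTranspose_apply]

/-- Small-coupling invariance step (Lemma 2 of the paper): if the spectral norm of `G` is small
enough, then `d_m² G̃ΘG̃ᵀ ≤ zI`, and the fixed-gain Riccati-type map sends `[0, Θ]` into itself. -/
theorem small_coupling_invariance {n m : ℕ}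
    (A G : Matrix (Fin n) (Fin n) ℝ) (C : Matrix (Fin m) (Fin n) ℝ)
    (μ : ℝ) (hμ : 0 < μ)
    (At : Matrix (Fin n) (Fin n) ℝ) (hAt : At = Real.sqrt (1 + μ) • A)
    (Gt : Matrix (Fin n) (Fin n) ℝ) (hGt : Gt = Real.sqrt (μ + μ ^ 2) • G)
    (Qm : Matrix (Fin n) (Fin n) ℝ) (hQm : Qm.PosDef)
    (Rm : Matrix (Fin m) (Fin m) ℝ) (hRm : Rm.PosDef)
    (dm : ℕ) (z : ℝ) (hz : 0 < z)
    (L : Matrix (Fin n) (Fin m) ℝ)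
    (hSchur : ∀ c ∈ spectrum ℂ (((1 - L * C) * At).map (algebraMap ℝ ℂ)), ‖c‖ < 1)
    (Θ : Matrix (Fin n) (Fin n) ℝ) (hΘ : Θ.PosDef)
    (hΘfix : Θ = (1 - L * C) * (At * Θ * Atᵀ + z • (1 : Matrix (Fin n) (Fin n) ℝ) + Qm)
        * (1 - L * C)ᵀ + L * Rm * Lᵀ)
    (hG : ‖G‖ ≤ Real.sqrt (z / ((dm : ℝ) ^ 2 * (μ + μ ^ 2) * (⨆ i, hΘ.1.eigenvalues i)))) :
    (z • (1 : Matrix (Fin n) (Fin n) ℝ) - (dm : ℝ) ^ 2 • (Gt * Θ * Gtᵀ)).PosSemidef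
    ∧ ∀ X : Matrix (Fin n) (Fin n) ℝ, X.PosSemidef → (Θ - X).PosSemidef →
        ((1 - L * C) * (At * X * Atᵀ + (dm : ℝ) ^ 2 • (Gt * X * Gtᵀ) + Qm) * (1 - L * C)ᵀ
            + L * Rm * Lᵀ).PosSemidef
        ∧ (Θ - ((1 - L * C) * (At * X * Atᵀ + (dm : ℝ) ^ 2 • (Gt * X * Gtᵀ) + Qm)
            * (1 - L * C)ᵀ + L * Rm * Lᵀ)).PosSemidef := by
  have hμμ : (0:ℝ) ≤ μ + μ ^ 2 := by nlinarith
  have hs2 : Real.sqrt (μ + μ ^ 2) ^ 2 = μ + μ ^ 2 := Real.sq_sqrt hμμ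
  set lam := ⨆ i, hΘ.1.eigenvalues i with hlam
  have hlam0 : 0 ≤ lam := Real.iSup_nonneg fun i => hΘ.posSemidef.eigenvalues_nonneg i
  set c : ℝ := (dm : ℝ) ^ 2 * (μ + μ ^ 2) with hcdef
  have hc0 : 0 ≤ c := by positivity
  -- Gt * M * Gtᵀ in terms of G
  have hGtM : ∀ M : Matrix (Fin n) (Fin n) ℝ,
      Gt * M * Gtᵀ = (μ + μ ^ 2) • (G * M * Gᵀ) := by
    intro M
    rw [hGt, Matrix.transpose_smul, Matrix.smul_mul, Matrix.mul_smul, Matrix.smul_mul,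
      smul_smul, ← pow_two, hs2]
  -- scalar inequality
  have hkey : c * lam * ‖G‖ ^ 2 ≤ z := by
    rcases eq_or_lt_of_le (mul_nonneg hc0 hlam0) with h | h
    · rw [← h, zero_mul]; exact hz.le
    · have hGsq : ‖G‖ ^ 2 ≤ z / (c * lam) := by
        have := pow_le_pow_left₀ (norm_nonneg G) hG 2
        rwa [Real.sq_sqrt (div_nonneg hz.le h.le)] at this
      rw [mul_comm (c * lam)]
      exact (le_div_iff₀ h).mp hGsq
  -- matrix chain
  have h1 : (lam • (G * Gᵀ) - G * Θ * Gᵀ).PosSemidef := by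
    have := (psd_sup_smul_one_sub hΘ.posSemidef).mul_mul_conjTranspose_same G
    rw [ct_eq] at this
    have he : G * (lam • 1 - Θ) * Gᵀ = lam • (G * Gᵀ) - G * Θ * Gᵀ := by
      simp only [Matrix.mul_sub, Matrix.sub_mul, mul_smul_comm, smul_mul_assoc, Matrix.mul_one]
    rwa [he] at this
  have h2 : ((lam * ‖G‖ ^ 2) • (1 : Matrix (Fin n) (Fin n) ℝ) - lam • (G * Gᵀ)).PosSemidef := by
    have := psd_smul (psd_norm_sq_smul_one_sub_mul_transpose G) hlam0
    rwa [smul_sub, smul_smul] at this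
  have h3 : ((lam * ‖G‖ ^ 2) • (1 : Matrix (Fin n) (Fin n) ℝ) - G * Θ * Gᵀ).PosSemidef := by
    have := h2.add h1
    rwa [sub_add_sub_cancel] at this
  have h4 : ((c * (lam * ‖G‖ ^ 2)) • (1 : Matrix (Fin n) (Fin n) ℝ)
      - c • (G * Θ * Gᵀ)).PosSemidef := by
    have := psd_smul h3 hc0
    rwa [smul_sub, smul_smul] at this
  have h5 : ((z - c * lam * ‖G‖ ^ 2) • (1 : Matrix (Fin n) (Fin n) ℝ)).PosSemidef :=
    psd_smul Matrix.PosSemidef.one (by linarith)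
  have hpart1 : (z • (1 : Matrix (Fin n) (Fin n) ℝ)
      - (dm : ℝ) ^ 2 • (Gt * Θ * Gtᵀ)).PosSemidef := by
    have hsum := h5.add h4
    have he : (z - c * lam * ‖G‖ ^ 2) • (1 : Matrix (Fin n) (Fin n) ℝ)
        + ((c * (lam * ‖G‖ ^ 2)) • (1 : Matrix (Fin n) (Fin n) ℝ) - c • (G * Θ * Gᵀ))
        = z • (1 : Matrix (Fin n) (Fin n) ℝ) - (dm : ℝ) ^ 2 • (Gt * Θ * Gtᵀ) := by
      rw [hGtM, smul_smul, ← hcdef]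
      module
    rwa [he] at hsum
  refine ⟨hpart1, fun X hX hXle => ?_⟩
  set K := 1 - L * C with hK
  have hLRL : (L * Rm * Lᵀ).PosSemidef := by
    have := hRm.posSemidef.mul_mul_conjTranspose_same L
    rwa [ct_eq] at this
  have hconjAt : ∀ {M : Matrix (Fin n) (Fin n) ℝ}, M.PosSemidef → (At * M * Atᵀ).PosSemidef := by
    intro M hM
    have := hM.mul_mul_conjTranspose_same At
    rwa [ct_eq] at this
  have hconjGt : ∀ {M : Matrix (Fin n) (Fin n) ℝ}, M.PosSemidef
      → ((dm : ℝ) ^ 2 • (Gt * M * Gtᵀ)).PosSemidef := by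
    intro M hM
    have := hM.mul_mul_conjTranspose_same Gt
    rw [ct_eq] at this
    exact psd_smul this (by positivity)
  constructor
  · have hS : (At * X * Atᵀ + (dm : ℝ) ^ 2 • (Gt * X * Gtᵀ) + Qm).PosSemidef :=
      ((hconjAt hX).add (hconjGt hX)).add hQm.posSemidef
    have := (hS.mul_mul_conjTranspose_same K).add hLRL
    rwa [ct_eq] at this
  · have hT : (At * (Θ - X) * Atᵀ
        + ((z • (1 : Matrix (Fin n) (Fin n) ℝ) - (dm : ℝ) ^ 2 • (Gt * Θ * Gtᵀ))
          + (dm : ℝ) ^ 2 • (Gt * (Θ - X) * Gtᵀ))).PosSemidef :=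
      (hconjAt hXle).add (hpart1.add (hconjGt hXle))
    have hinner : (At * Θ * Atᵀ + z • (1 : Matrix (Fin n) (Fin n) ℝ) + Qm)
        - (At * X * Atᵀ + (dm : ℝ) ^ 2 • (Gt * X * Gtᵀ) + Qm)
        = At * (Θ - X) * Atᵀ
          + ((z • (1 : Matrix (Fin n) (Fin n) ℝ) - (dm : ℝ) ^ 2 • (Gt * Θ * Gtᵀ))
            + (dm : ℝ) ^ 2 • (Gt * (Θ - X) * Gtᵀ)) := by
      simp only [Matrix.mul_sub, Matrix.sub_mul]
      module
    have hTe : Θ - (K * (At * X * Atᵀ + (dm : ℝ) ^ 2 • (Gt * X * Gtᵀ) + Qm) * Kᵀ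
        + L * Rm * Lᵀ)
        = K * ((At * Θ * Atᵀ + z • (1 : Matrix (Fin n) (Fin n) ℝ) + Qm)
          - (At * X * Atᵀ + (dm : ℝ) ^ 2 • (Gt * X * Gtᵀ) + Qm)) * Kᵀ := by
      conv_lhs => rw [hΘfix]
      rw [add_sub_add_right_eq_sub, ← Matrix.sub_mul, ← Matrix.mul_sub]
    rw [hTe, hinner]
    have := hT.mul_mul_conjTranspose_same K
    rwa [ct_eq] at this
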